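/- Let V be an n-dimensional vector space over F_q with n > 1, and let F ⊆ L(V) be an antichain (no member is a proper subspace of another, and all members distinct). Then |F| ≤ [n choose ⌊n/2⌋]_q, with equality if and only if F = [V choose ⌊n/2⌋] or F = [V choose ⌈n/2⌉]. -/

import Mathlib

open Module Set

/-- The Gaussian (q-)binomial coefficient, via the standard Pascal-type recurrence. -/
def gbinom (q : ℕ) : ℕ → ℕ → ℕ
  | _, 0 => 1
  | 0, _ + 1 => 0
  | n + 1, k + 1 => gbinom q n k + q ^ (k + 1) * gbinom q n (k + 1)

namespace QS

def bcount (q : ℕ) : ℕ → ℕ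
  | 0 => 1
  | m + 1 => (q ^ (m + 1) - 1) * q ^ m * bcount q m

@[simp] lemma bcount_zero (q : ℕ) : bcount q 0 = 1 := rfl

lemma bcount_succ (q m : ℕ) : bcount q (m+1) = (q ^ (m + 1) - 1) * q ^ m * bcount q m := rfl

lemma bcount_pos {q : ℕ} (hq : 2 ≤ q) (m : ℕ) : 0 < bcount q m := by
  induction m with
  | zero => simp
  | succ m ih =>
    have h1 : 2 ≤ q ^ (m+1) := le_trans hq (Nat.le_self_pow (by omega) q)
    have h2 : 0 < q ^ m := pow_pos (by omega) _
    rw [bcount_succ]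
    have : 0 < q ^ (m+1) - 1 := by omega
    positivity

lemma bcount_cast {q : ℕ} (hq : 1 ≤ q) (m : ℕ) :
    (bcount q (m+1) : ℤ) = ((q:ℤ) ^ (m + 1) - 1) * (q:ℤ) ^ m * bcount q m := by
  have h1 : (1:ℕ) ≤ q ^ (m+1) := Nat.one_le_pow _ _ (by omega)
  rw [bcount_succ]
  push_cast [h1]
  ring

lemma gbinom_zero_right (q n : ℕ) : gbinom q n 0 = 1 := by cases n <;> rfl

lemma gbinom_eq_zero_of_lt {q : ℕ} : ∀ {n k : ℕ}, n < k → gbinom q n k = 0 := by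
  intro n
  induction n with
  | zero => intro k hk; cases k with
    | zero => omega
    | succ k => rfl
  | succ n ih =>
    intro k hk
    cases k with
    | zero => omega
    | succ k =>
      show gbinom q n k + q ^ (k+1) * gbinom q n (k+1) = 0
      rw [ih (by omega), ih (by omega)]
      simp

lemma gbinom_self (q : ℕ) : ∀ n, gbinom q n n = 1 := by
  intro n
  induction n with
  | zero => rfl
  | succ n ih =>
    show gbinom q n n + q ^ (n+1) * gbinom q n (n+1) = 1
    rw [ih, gbinom_eq_zero_of_lt (by omega)]
    simp

lemma key_identity {q : ℕ} (hq : 1 ≤ q) :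
    ∀ n k, k ≤ n →
      gbinom q n k * (bcount q k * bcount q (n - k) * q ^ (k * (n - k))) = bcount q n := by
  intro n
  induction n with
  | zero => intro k hk; interval_cases k; simp [gbinom_zero_right]
  | succ n ih =>
    intro k hk
    cases k with
    | zero => simp [gbinom_zero_right]
    | succ k =>
      rcases Nat.lt_or_ge k n with hlt | hge
      · -- k + 1 ≤ n : write n = k + d + 1
        obtain ⟨d, rfl⟩ : ∃ d, n = k + d + 1 := ⟨n - k - 1, by omega⟩
        have IH1 := ih k (by omega)
        have IH2 := ih (k+1) (by omega)
        rw [show k + d + 1 - k = d + 1 from by omega] at IH1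
        rw [show k + d + 1 - (k+1) = d from by omega] at IH2
        show (gbinom q (k+d+1) k + q ^ (k+1) * gbinom q (k+d+1) (k+1)) *
          (bcount q (k+1) * bcount q (k+d+1+1 - (k+1)) * q ^ ((k+1) * (k+d+1+1 - (k+1)))) =
          bcount q (k+d+1+1)
        rw [show k+d+1+1 - (k+1) = d + 1 from by omega]
        have goalZ : ((gbinom q (k+d+1) k : ℤ) + (q:ℤ) ^ (k+1) * gbinom q (k+d+1) (k+1)) *
            ((bcount q (k+1) : ℤ) * bcount q (d+1) * (q:ℤ) ^ ((k+1) * (d+1))) =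
            (bcount q (k+d+2) : ℤ) := by
          have hI1 : (gbinom q (k+d+1) k : ℤ) *
              ((bcount q k : ℤ) * bcount q (d+1) * (q:ℤ) ^ (k * (d+1))) = bcount q (k+d+1) := by
            exact_mod_cast congrArg (Nat.cast : ℕ → ℤ) IH1
          have hI2 : (gbinom q (k+d+1) (k+1) : ℤ) *
              ((bcount q (k+1) : ℤ) * bcount q d * (q:ℤ) ^ ((k+1) * d)) = bcount q (k+d+1) := by
            exact_mod_cast congrArg (Nat.cast : ℕ → ℤ) IH2
          rw [show k + d + 2 = (k + d + 1) + 1 from rfl, bcount_cast hq (k+d+1),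
            bcount_cast hq k, bcount_cast hq d]
          rw [bcount_cast hq d] at hI1
          rw [bcount_cast hq k] at hI2
          linear_combination (((q:ℤ)^(k+1) - 1) * (q:ℤ)^(k+d+1)) * hI1 +
            (((q:ℤ)^(d+1) - 1) * (q:ℤ)^(2*k+d+2)) * hI2
        exact_mod_cast goalZ
      · -- k = n
        obtain rfl : n = k := by omega
        show (gbinom q n n + q ^ (n+1) * gbinom q n (n+1)) *
          (bcount q (n+1) * bcount q (n+1 - (n+1)) * q ^ ((n+1) * (n+1-(n+1)))) = bcount q (n+1)
        rw [gbinom_eq_zero_of_lt (show n < n+1 by omega), gbinom_self]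
        simp

-- continuation, appended to num.lean content in test
lemma gbinom_pos {q : ℕ} (hq : 2 ≤ q) {n k : ℕ} (hk : k ≤ n) : 0 < gbinom q n k := by
  have h := key_identity (by omega : 1 ≤ q) n k hk
  have hb := bcount_pos hq n
  rcases Nat.eq_zero_or_pos (gbinom q n k) with h0 | h0
  · rw [h0, zero_mul] at h; omega
  · exact h0

lemma gbinom_cross {q : ℕ} (hq : 2 ≤ q) {n k : ℕ} (hk : k < n) :
    gbinom q n k * (q ^ (n - k) - 1) = gbinom q n (k+1) * (q ^ (k+1) - 1) := by
  obtain ⟨d, rfl⟩ : ∃ d, n = k + d + 1 := ⟨n - k - 1, by omega⟩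
  have hq1 : 1 ≤ q := by omega
  have h1 := key_identity hq1 (k+d+1) k (by omega)
  have h2 := key_identity hq1 (k+d+1) (k+1) (by omega)
  rw [show k + d + 1 - k = d + 1 from by omega, bcount_succ q d] at h1
  rw [show k + d + 1 - (k+1) = d from by omega, bcount_succ q k] at h2
  rw [show k + d + 1 - k = d + 1 from by omega]
  have e1 : (1:ℕ) ≤ q ^ (d+1) := Nat.one_le_pow _ _ (by omega)
  have e2 : (1:ℕ) ≤ q ^ (k+1) := Nat.one_le_pow _ _ (by omega)
  have hP : ((bcount q k : ℤ) * bcount q d * (q:ℤ) ^ (k*d + k + d)) ≠ 0 := by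
    have := bcount_pos hq k
    have := bcount_pos hq d
    have : (0:ℕ) < q ^ (k*d+k+d) := pow_pos (by omega) _
    positivity
  zify [e1, e2]
  apply mul_right_cancel₀ hP
  have h1' : (gbinom q (k+d+1) k : ℤ) *
      ((bcount q k : ℤ) * (((q:ℤ)^(d+1) - 1) * (q:ℤ)^d * bcount q d) * (q:ℤ)^(k*(d+1))) =
      bcount q (k+d+1) := by
    have h := congrArg (Nat.cast : ℕ → ℤ) h1
    push_cast [e1] at h
    linear_combination h
  have h2' : (gbinom q (k+d+1) (k+1) : ℤ) *
      ((((q:ℤ)^(k+1) - 1) * (q:ℤ)^k * bcount q k) * (bcount q d) * (q:ℤ)^((k+1)*d)) =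
      bcount q (k+d+1) := by
    have h := congrArg (Nat.cast : ℕ → ℤ) h2
    push_cast [e2] at h
    linear_combination h
  linear_combination h1' - h2'

lemma gbinom_lt {q : ℕ} (hq : 2 ≤ q) {n k : ℕ} (h : 2 * (k + 1) ≤ n) :
    gbinom q n k < gbinom q n (k+1) := by
  have hc := gbinom_cross hq (show k < n by omega)
  have h1 : q ^ (k+1) < q ^ (n-k) := Nat.pow_lt_pow_right (by omega) (by omega)
  have h2 : 1 ≤ q ^ (k+1) := Nat.one_le_pow _ _ (by omega)
  have h3 := gbinom_pos hq (show k + 1 ≤ n by omega)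
  have h2' : 1 ≤ q ^ (n - k) := le_trans h2 (le_of_lt h1)
  rcases Nat.lt_or_ge (gbinom q n k) (gbinom q n (k+1)) with hlt | hge
  · exact hlt
  · exfalso
    zify [h2, h2'] at hc
    have c1 : (gbinom q n (k+1) : ℤ) ≤ gbinom q n k := by exact_mod_cast hge
    have c2 : ((q:ℤ) ^ (k+1)) < (q:ℤ) ^ (n-k) := by exact_mod_cast h1
    have c3 : (0:ℤ) < gbinom q n (k+1) := by exact_mod_cast h3
    nlinarith [mul_le_mul_of_nonneg_right c1 (show (0:ℤ) ≤ (q:ℤ)^(n-k) - 1 by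
        have : (1:ℤ) ≤ (q:ℤ)^(n-k) := by exact_mod_cast h2'
        linarith),
      mul_lt_mul_of_pos_left c2 c3]

lemma gbinom_gt {q : ℕ} (hq : 2 ≤ q) {n k : ℕ} (h : n ≤ 2 * k) (hk : k < n) :
    gbinom q n (k+1) < gbinom q n k := by
  have hc := gbinom_cross hq hk
  have h1 : q ^ (n-k) < q ^ (k+1) := Nat.pow_lt_pow_right (by omega) (by omega)
  have h2 : 1 ≤ q ^ (n-k) := Nat.one_le_pow _ _ (by omega)
  have h3 := gbinom_pos hq (show k ≤ n by omega)
  have h2' : 1 ≤ q ^ (k+1) := le_trans h2 (le_of_lt h1)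
  rcases Nat.lt_or_ge (gbinom q n (k+1)) (gbinom q n k) with hlt | hge
  · exact hlt
  · exfalso
    zify [h2, h2'] at hc
    have c1 : (gbinom q n k : ℤ) ≤ gbinom q n (k+1) := by exact_mod_cast hge
    have c2 : ((q:ℤ) ^ (n-k)) < (q:ℤ) ^ (k+1) := by exact_mod_cast h1
    have c3 : (0:ℤ) < gbinom q n k := by exact_mod_cast h3
    nlinarith [mul_le_mul_of_nonneg_right c1 (show (0:ℤ) ≤ (q:ℤ)^(k+1) - 1 by
        have : (1:ℤ) ≤ (q:ℤ)^(k+1) := by exact_mod_cast h2'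
        linarith),
      mul_lt_mul_of_pos_left c2 c3]

lemma gbinom_mid_eq {q : ℕ} (hq : 2 ≤ q) {n k : ℕ} (h : 2 * k + 1 = n) :
    gbinom q n k = gbinom q n (k+1) := by
  have hc := gbinom_cross hq (show k < n by omega)
  rw [show n - k = k + 1 from by omega] at hc
  have h2 : 2 ≤ q ^ (k+1) := le_trans hq (Nat.le_self_pow (by omega) q)
  exact Nat.eq_of_mul_eq_mul_right (by omega) hc

lemma gbinom_strict_inc {q : ℕ} (hq : 2 ≤ q) {n i j : ℕ} (hij : i < j) (hj : j ≤ n / 2) :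
    gbinom q n i < gbinom q n j := by
  induction j with
  | zero => omega
  | succ j ih =>
    have hstep : gbinom q n j < gbinom q n (j+1) := gbinom_lt hq (by omega)
    rcases Nat.lt_or_ge i j with h | h
    · exact lt_trans (ih h (by omega)) hstep
    · obtain rfl : i = j := by omega
      exact hstep

lemma gbinom_strict_dec {q : ℕ} (hq : 2 ≤ q) {n i j : ℕ} (hi : (n+1)/2 ≤ i) (hij : i < j)
    (hj : j ≤ n) : gbinom q n j < gbinom q n i := by
  induction j with
  | zero => omega
  | succ j ih =>
    have hstep : gbinom q n (j+1) < gbinom q n j := gbinom_gt hq (by omega) (by omega)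
    rcases Nat.lt_or_ge i j with h | h
    · exact lt_trans hstep (ih h (by omega))
    · obtain rfl : i = j := by omega
      exact hstep

lemma gbinom_mid_eq' {q : ℕ} (hq : 2 ≤ q) (n : ℕ) :
    gbinom q n (n/2) = gbinom q n ((n+1)/2) := by
  rcases Nat.even_or_odd n with he | ho
  · obtain ⟨m, rfl⟩ := he
    rw [show m + m = 2 * m from by ring, show (2*m)/2 = m from by omega,
      show (2*m+1)/2 = m from by omega]
  · obtain ⟨m, rfl⟩ := ho
    rw [show (2*m+1)/2 = m from by omega, show (2*m+1+1)/2 = m+1 from by omega]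
    exact gbinom_mid_eq hq rfl

lemma gbinom_le_middle {q : ℕ} (hq : 2 ≤ q) {n k : ℕ} (hk : k ≤ n) :
    gbinom q n k ≤ gbinom q n (n/2) := by
  rcases Nat.lt_or_ge k (n/2) with h | h
  · exact le_of_lt (gbinom_strict_inc hq h le_rfl)
  rcases Nat.lt_or_ge ((n+1)/2) k with h' | h'
  · rw [gbinom_mid_eq' hq]
    exact le_of_lt (gbinom_strict_dec hq le_rfl h' hk)
  · -- n/2 ≤ k ≤ (n+1)/2
    rcases Nat.eq_or_lt_of_le h with rfl | hlt
    · exact le_rfl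
    · have : k = (n+1)/2 := by omega
      rw [this, gbinom_mid_eq' hq]

lemma gbinom_eq_middle_iff {q : ℕ} (hq : 2 ≤ q) {n k : ℕ} (hk : k ≤ n) :
    gbinom q n k = gbinom q n (n/2) ↔ k = n / 2 ∨ k = (n+1)/2 := by
  constructor
  · intro h
    by_contra hne
    push_neg at hne
    rcases Nat.lt_or_ge k (n/2) with h' | h'
    · exact absurd h (ne_of_lt (gbinom_strict_inc hq h' le_rfl))
    rcases Nat.lt_or_ge ((n+1)/2) k with h'' | h''
    · rw [gbinom_mid_eq' hq] at h
      exact absurd h (ne_of_lt (gbinom_strict_dec hq le_rfl h'' hk))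
    · omega
  · rintro (rfl | rfl)
    · rfl
    · exact (gbinom_mid_eq' hq n).symm

end QS

set_option linter.unusedSectionVars false

section AllGeom


open Module Set Submodule

variable (K : Type*) {V : Type*} [Field K] [AddCommGroup V] [Module K V]
  [FiniteDimensional K V]

/-- span of the first `r` coordinates of a tuple. -/
def sfirst (r : ℕ) {N : ℕ} (w : Fin N → V) : Submodule K V :=
  span K (w '' {x : Fin N | (x : ℕ) < r})

variable {K}

lemma sfirst_mono {r r' N : ℕ} (h : r ≤ r') (w : Fin N → V) :
    sfirst K r w ≤ sfirst K r' w :=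
  span_mono (image_mono (fun x hx => lt_of_lt_of_le hx h))

lemma sfirst_image_eq {r N : ℕ} (h : r ≤ N) (w : Fin N → V) :
    w '' {x : Fin N | (x : ℕ) < r} =
      range (fun i : Fin r => w ⟨i, lt_of_lt_of_le i.2 h⟩) := by
  ext y
  constructor
  · rintro ⟨x, hx, rfl⟩
    exact ⟨⟨x.1, hx⟩, rfl⟩
  · rintro ⟨i, rfl⟩
    exact ⟨⟨i, lt_of_lt_of_le i.2 h⟩, i.2, rfl⟩

lemma sfirst_eq_span {r N : ℕ} (h : r ≤ N) (w : Fin N → V) :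
    sfirst K r w = span K (range (fun i : Fin r => w ⟨i, lt_of_lt_of_le i.2 h⟩)) := by
  rw [sfirst, sfirst_image_eq h]

lemma finrank_sfirst {r N : ℕ} (h : r ≤ N) {w : Fin N → V} (hw : LinearIndependent K w) :
    finrank K ↥(sfirst K r w) = r := by
  rw [sfirst_eq_span h]
  rw [show (fun i : Fin r => w ⟨i, lt_of_lt_of_le i.2 h⟩) =
    w ∘ (fun i : Fin r => (⟨i, lt_of_lt_of_le i.2 h⟩ : Fin N)) from rfl]
  have hinj : Function.Injective (fun i : Fin r => (⟨i, lt_of_lt_of_le i.2 h⟩ : Fin N)) := by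
    intro a b hab
    simpa [Fin.ext_iff] using hab
  rw [finrank_span_eq_card (hw.comp _ hinj), Fintype.card_fin]

lemma sfirst_eq_of_agree {r N : ℕ} (h : r ≤ N) {w : Fin N → V} {u : Fin r → V}
    (hag : ∀ (i : Fin N) (hi : (i : ℕ) < r), w i = u ⟨i, hi⟩) :
    sfirst K r w = span K (range u) := by
  rw [sfirst]
  congr 1
  ext y
  constructor
  · rintro ⟨x, hx, rfl⟩
    exact ⟨⟨x.1, hx⟩, (hag x hx).symm⟩
  · rintro ⟨i, rfl⟩
    exact ⟨⟨i, lt_of_lt_of_le i.2 h⟩, i.2, (hag ⟨i, lt_of_lt_of_le i.2 h⟩ i.2)⟩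

lemma sfirst_le_span_range {r N : ℕ} (w : Fin N → V) :
    sfirst K r w ≤ span K (range w) :=
  span_mono (image_subset_range _ _)

lemma exists_li_span (A : Submodule K V) :
    ∃ u : Fin (finrank K ↥A) → V, LinearIndependent K u ∧ span K (range u) = A := by
  let b := Module.finBasis K ↥A
  refine ⟨fun i => ↑(b i), b.linearIndependent.map' A.subtype (Submodule.ker_subtype A), ?_⟩
  rw [show (fun i => ((b i : V))) = A.subtype ∘ b from rfl, Set.range_comp,
    ← Submodule.map_span, b.span_eq, Submodule.map_top, Submodule.range_subtype]

lemma exists_extend {W : Submodule K V} :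
    ∀ (d j : ℕ) (u : Fin j → V), LinearIndependent K u → span K (range u) ≤ W →
      j + d = finrank K ↥W →
      ∃ w : Fin (finrank K ↥W) → V, LinearIndependent K w ∧ span K (range w) = W ∧
        ∀ (i : Fin (finrank K ↥W)) (hi : (i : ℕ) < j), w i = u ⟨i, hi⟩ := by
  intro d
  induction d with
  | zero =>
    intro j u hu hle hj
    rw [Nat.add_zero] at hj
    refine ⟨fun i => u ⟨i, by omega⟩, ?_, ?_, fun i hi => rfl⟩
    · have : (fun i : Fin (finrank K ↥W) => u ⟨i, by omega⟩) = u ∘ (finCongr hj.symm) := rfl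
      rw [this]
      exact hu.comp _ (finCongr hj.symm).injective
    · have hr : range (fun i : Fin (finrank K ↥W) => u ⟨i.1, by omega⟩) = range u := by
        have : (fun i : Fin (finrank K ↥W) => u ⟨i, by omega⟩) = u ∘ (finCongr hj.symm) := rfl
        rw [this]
        exact (finCongr hj.symm).surjective.range_comp u
      rw [hr]
      refine Submodule.eq_of_le_of_finrank_le hle ?_
      rw [finrank_span_eq_card hu, Fintype.card_fin, hj]
  | succ d ih =>
    intro j u hu hle hj
    have hfr : finrank K ↥(span K (range u)) = j := by
      rw [finrank_span_eq_card hu, Fintype.card_fin]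
    obtain ⟨x, hxW, hxu⟩ : ∃ x ∈ W, x ∉ span K (range u) := by
      by_contra hc
      push_neg at hc
      have hWle : W ≤ span K (range u) := hc
      have : finrank K ↥W ≤ j := by
        rw [← hfr]
        exact Submodule.finrank_mono hWle
      omega
    have hu' : LinearIndependent K (Fin.snoc u x : Fin (j+1) → V) :=
      linearIndependent_fin_snoc.mpr ⟨hu, hxu⟩
    have hle' : span K (range (Fin.snoc u x : Fin (j+1) → V)) ≤ W := by
      rw [Submodule.span_le]
      rintro y ⟨i, rfl⟩
      refine Fin.lastCases ?_ ?_ i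
      · rw [Fin.snoc_last]; exact hxW
      · intro i
        rw [Fin.snoc_castSucc]
        exact hle (Submodule.subset_span ⟨i, rfl⟩)
    obtain ⟨w, h1, h2, h3⟩ := ih (j+1) (Fin.snoc u x) hu' hle' (by omega)
    refine ⟨w, h1, h2, fun i hi => ?_⟩
    rw [h3 i (by omega)]
    have hcast : (⟨i.1, by omega⟩ : Fin (j+1)) = Fin.castSucc ⟨i.1, hi⟩ := rfl
    rw [hcast, Fin.snoc_castSucc]

lemma exists_subspace_between {U W : Submodule K V} (hUW : U ≤ W) {r : ℕ} (h1 : finrank K ↥U ≤ r)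
    (h2 : r ≤ finrank K ↥W) : ∃ X : Submodule K V, U ≤ X ∧ X ≤ W ∧ finrank K ↥X = r := by
  obtain ⟨u, hu, hspan⟩ := exists_li_span U
  obtain ⟨w, hw, hspanw, hag⟩ := exists_extend (finrank K ↥W - finrank K ↥U) (finrank K ↥U) u hu
    (hspan ▸ hUW) (by omega)
  refine ⟨sfirst K r w, ?_, ?_, finrank_sfirst h2 hw⟩
  · rw [← hspan, ← sfirst_eq_of_agree (le_trans h1 h2) hag]
    exact sfirst_mono h1 w
  · exact le_trans (sfirst_le_span_range w) (le_of_eq hspanw)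

/-- A linearly independent tuple of full length whose initial spans realize a
given pair `C ≤ D`. -/
lemma exists_tuple_pair {C D : Submodule K V} (hCD : C ≤ D) :
    ∃ b : Fin (finrank K V) → V, LinearIndependent K b ∧
      sfirst K (finrank K ↥C) b = C ∧ sfirst K (finrank K ↥D) b = D := by
  obtain ⟨u, hu, hspanu⟩ := exists_li_span C
  obtain ⟨v, hv, hspanv, hagv⟩ := exists_extend (finrank K ↥D - finrank K ↥C) (finrank K ↥C) u hu
    (hspanu ▸ hCD) (by have := Submodule.finrank_mono hCD; omega)
  have hvle : span K (range v) ≤ (⊤ : Submodule K V) := le_top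
  obtain ⟨w, hw, hspanw, hagw⟩ := exists_extend (finrank K ↥(⊤ : Submodule K V) - finrank K ↥D)
    (finrank K ↥D) v hv hvle (by
      have : finrank K ↥D ≤ finrank K ↥(⊤ : Submodule K V) := Submodule.finrank_mono le_top
      omega)
  have htop : finrank K ↥(⊤ : Submodule K V) = finrank K V := finrank_top K V
  refine ⟨w ∘ (finCongr htop.symm), (hw.comp _ (finCongr htop.symm).injective), ?_, ?_⟩
  · rw [sfirst_eq_of_agree (h := ?hle1) (u := u), hspanu]
    case hle1 =>
      have h1 := Submodule.finrank_mono hCD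
      have h2 := Submodule.finrank_mono (le_top (a := D))
      omega
    intro i hi
    show w (finCongr htop.symm i) = u ⟨i, hi⟩
    rw [hagw _ (by simpa using lt_of_lt_of_le hi (Submodule.finrank_mono hCD)),
      hagv _ (by simpa using hi)]
    exact congrArg u (Fin.ext rfl)
  · rw [sfirst_eq_of_agree (h := ?hle2) (u := v), hspanv]
    case hle2 =>
      have h2 := Submodule.finrank_mono (le_top (a := D))
      omega
    intro i hi
    show w (finCongr htop.symm i) = v ⟨i, hi⟩
    rw [hagw _ (by simpa using hi)]
    exact congrArg v (Fin.ext rfl)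

lemma finrank_sup_span_singleton {E : Submodule K V} {x : V} (hx : x ∉ E) :
    finrank K ↥(E ⊔ K ∙ x) = finrank K ↥E + 1 := by
  have hx0 : x ≠ 0 := fun h => hx (h ▸ E.zero_mem)
  have hinf : E ⊓ (K ∙ x) = ⊥ := by
    rw [eq_bot_iff]
    rintro y ⟨hyE, hyx⟩
    obtain ⟨c, rfl⟩ := Submodule.mem_span_singleton.mp hyx
    rcases eq_or_ne c 0 with rfl | hc
    · simp
    · have hx' : c⁻¹ • (c • x) ∈ E := E.smul_mem c⁻¹ hyE
      rw [smul_smul, inv_mul_cancel₀ hc, one_smul] at hx'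
      exact absurd hx' hx
  have := Submodule.finrank_sup_add_finrank_inf_eq E (K ∙ x)
  rw [hinf, finrank_bot, finrank_span_singleton hx0] at this
  omega

end AllGeom

section Counting
set_option linter.unusedSectionVars false

open Module Set Submodule

attribute [local instance] Classical.propDecidable

namespace QS

lemma bcount_eq_prod (q m : ℕ) :
    bcount q m = ∏ i ∈ Finset.range m, (q ^ m - q ^ i) := by
  induction m with
  | zero => simp
  | succ m ih =>
    rw [Finset.prod_range_succ']
    have hfac : ∀ i, q ^ (m+1) - q ^ (i+1) = q * (q ^ m - q ^ i) := by
      intro i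
      rw [Nat.mul_sub, pow_succ, pow_succ]
      ring_nf
    calc bcount q (m+1) = (q ^ (m+1) - 1) * q ^ m * bcount q m := rfl
      _ = (∏ _i ∈ Finset.range m, q) * (∏ i ∈ Finset.range m, (q ^ m - q ^ i))
            * (q ^ (m+1) - 1) := by
          rw [Finset.prod_const, Finset.card_range, ← ih]; ring
      _ = (∏ i ∈ Finset.range m, (q ^ (m+1) - q ^ (i+1))) * (q ^ (m+1) - q ^ 0) := by
          rw [← Finset.prod_mul_distrib]
          simp only [hfac, pow_zero]
      _ = _ := rfl

end QS

variable {K : Type*} [Field K] [Fintype K] {q : ℕ}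

lemma card_module_eq {M : Type*} [AddCommGroup M] [Module K M] [FiniteDimensional K M]
    (hK : Fintype.card K = q) : Nat.card M = q ^ finrank K M := by
  have : Finite M := Module.finite_of_finite K
  cases nonempty_fintype M
  rw [Nat.card_eq_fintype_card, Module.card_fintype (Module.finBasis K M),
    ← Module.finrank_eq_card_basis (Module.finBasis K M), hK]

lemma card_li_fiber {M : Type*} [AddCommGroup M] [Module K M] [FiniteDimensional K M]
    [Fintype M] (hK : Fintype.card K = q) {j : ℕ} (u : Fin j → M) (hu : LinearIndependent K u) :
    ((Finset.univ.filter (fun v : Fin (j+1) → M => LinearIndependent K v)).filter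
        (fun v => Fin.init v = u)).card = Fintype.card M - q ^ j := by
  have : Finite M := Module.finite_of_finite K
  have hspan : Nat.card ↥(span K (Set.range u)) = q ^ j := by
    rw [card_module_eq hK, finrank_span_eq_card hu, Fintype.card_fin]
  have hcard : (Finset.univ.filter (fun x : M => x ∉ span K (Set.range u))).card
      = Fintype.card M - q ^ j := by
    rw [Finset.filter_not, Finset.card_sdiff_of_subset (Finset.filter_subset _ _), Finset.card_univ]
    congr 1
    rw [← hspan, Nat.card_eq_fintype_card, Fintype.card_subtype]
  rw [← hcard]
  refine Finset.card_bij (fun v _ => v (Fin.last j)) ?_ ?_ ?_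
  · intro v hv
    simp only [Finset.mem_filter, Finset.mem_univ, true_and] at hv ⊢
    obtain ⟨h1, h2⟩ := hv
    have : LinearIndependent K (Fin.snoc u (v (Fin.last j)) : Fin (j+1) → M) := by
      rw [← h2, Fin.snoc_init_self]; exact h1
    exact (linearIndependent_fin_snoc.mp this).2
  · intro v1 hv1 v2 hv2 hlast
    simp only [Finset.mem_filter, Finset.mem_univ, true_and] at hv1 hv2
    rw [← Fin.snoc_init_self v1, ← Fin.snoc_init_self v2, hv1.2, hv2.2,
      show v1 (Fin.last j) = v2 (Fin.last j) from hlast]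
  · intro x hx
    simp only [Finset.mem_filter, Finset.mem_univ, true_and] at hx
    refine ⟨Fin.snoc u x, ?_, ?_⟩
    · simp only [Finset.mem_filter, Finset.mem_univ, true_and]
      exact ⟨linearIndependent_fin_snoc.mpr ⟨hu, hx⟩, by simp⟩
    · simp

lemma card_li_tuples {M : Type*} [AddCommGroup M] [Module K M] [FiniteDimensional K M]
    (hK : Fintype.card K = q) (j : ℕ) :
    Nat.card {v : Fin j → M // LinearIndependent K v} =
      ∏ i ∈ Finset.range j, (q ^ finrank K M - q ^ i) := by
  have : Finite M := Module.finite_of_finite K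
  cases nonempty_fintype M
  have hM : Fintype.card M = q ^ finrank K M := by
    rw [← Nat.card_eq_fintype_card, card_module_eq hK]
  induction j with
  | zero =>
    rw [Finset.range_zero, Finset.prod_empty]
    have : ∀ v : Fin 0 → M, LinearIndependent K v := fun v => linearIndependent_empty_type
    rw [Nat.card_congr (Equiv.subtypeUnivEquiv this)]
    exact Nat.card_unique
  | succ j ih =>
    rw [Nat.card_eq_fintype_card, Fintype.card_subtype]
    have hmap : ∀ v ∈ (Finset.univ.filter (fun v : Fin (j+1) → M => LinearIndependent K v)),
        Fin.init v ∈ (Finset.univ.filter (fun u : Fin j → M => LinearIndependent K u)) := by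
      intro v hv
      simp only [Finset.mem_filter, Finset.mem_univ, true_and] at hv ⊢
      have : LinearIndependent K (Fin.snoc (Fin.init v) (v (Fin.last j)) : Fin (j+1) → M) := by
        rw [Fin.snoc_init_self]; exact hv
      exact (linearIndependent_fin_snoc.mp this).1
    rw [Finset.card_eq_sum_card_fiberwise hmap]
    have hconst : ∀ u ∈ (Finset.univ.filter (fun u : Fin j → M => LinearIndependent K u)),
        ((Finset.univ.filter (fun v : Fin (j+1) → M => LinearIndependent K v)).filter
          (fun v => Fin.init v = u)).card = q ^ finrank K M - q ^ j := by
      intro u hu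
      simp only [Finset.mem_filter, Finset.mem_univ, true_and] at hu
      rw [card_li_fiber hK u hu, hM]
    rw [Finset.sum_congr rfl hconst, Finset.sum_const, smul_eq_mul]
    have hcnt : (Finset.univ.filter (fun u : Fin j → M => LinearIndependent K u)).card
        = ∏ i ∈ Finset.range j, (q ^ finrank K M - q ^ i) := by
      rw [← Fintype.card_subtype, ← Nat.card_eq_fintype_card]
      exact ih
    rw [hcnt, Finset.prod_range_succ]

end Counting

section Selector
set_option linter.unusedSectionVars false
set_option maxHeartbeats 1000000

open Module Set Submodule

attribute [local instance] Classical.propDecidable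

variable {K V : Type*} [Field K] [Fintype K] [AddCommGroup V] [Module K V]
  [FiniteDimensional K V] {q : ℕ}

lemma li_sum_elim_iff {k l : ℕ} {u : Fin k → V} {w : Fin l → V} {A : Submodule K V}
    (hu : LinearIndependent K u) (hspan : span K (range u) = A) :
    LinearIndependent K (Sum.elim u w) ↔ LinearIndependent K (A.mkQ ∘ w) := by
  constructor
  · intro hli
    rw [Fintype.linearIndependent_iff]
    intro g hg
    have hmem : ∑ j, g j • w j ∈ A := by
      rw [← Submodule.Quotient.mk_eq_zero A, ← Submodule.mkQ_apply, map_sum]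
      simp only [map_smul]
      exact hg
    rw [← hspan, mem_span_range_iff_exists_fun] at hmem
    obtain ⟨c, hc⟩ := hmem
    have hzero : ∑ s : Fin k ⊕ Fin l, Sum.elim c (fun j => - g j) s • Sum.elim u w s = 0 := by
      rw [Fintype.sum_sum_type]
      simp only [Sum.elim_inl, Sum.elim_inr, neg_smul]
      rw [Finset.sum_neg_distrib, hc]
      exact add_neg_cancel _
    have hall := Fintype.linearIndependent_iff.mp hli _ hzero
    intro j
    have := hall (Sum.inr j)
    simp only [Sum.elim_inr, neg_eq_zero] at this
    exact this
  · intro hq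
    rw [Fintype.linearIndependent_iff]
    intro g hg
    have huA : ∀ i, u i ∈ A := fun i => hspan ▸ subset_span (mem_range_self i)
    have hg2 : ∑ j, g (Sum.inr j) • (A.mkQ ∘ w) j = 0 := by
      have happ := congrArg A.mkQ hg
      rw [map_sum, map_zero] at happ
      rw [Fintype.sum_sum_type] at happ
      simp only [Sum.elim_inl, Sum.elim_inr, map_smul] at happ
      have hz : ∀ i, g (Sum.inl i) • A.mkQ (u i) = 0 := by
        intro i
        rw [Submodule.mkQ_apply, (Submodule.Quotient.mk_eq_zero A).mpr (huA i), smul_zero]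
      rw [Finset.sum_congr rfl (fun i _ => hz i), Finset.sum_const_zero, zero_add] at happ
      exact happ
    have hinr : ∀ j, g (Sum.inr j) = 0 := Fintype.linearIndependent_iff.mp hq _ hg2
    have hg1 : ∑ i, g (Sum.inl i) • u i = 0 := by
      rw [Fintype.sum_sum_type] at hg
      simp only [Sum.elim_inl, Sum.elim_inr] at hg
      have : ∀ j, g (Sum.inr j) • w j = 0 := fun j => by rw [hinr j, zero_smul]
      rw [Finset.sum_congr rfl (fun j _ => this j), Finset.sum_const_zero, add_zero] at hg
      exact hg
    have hinl : ∀ i, g (Sum.inl i) = 0 := Fintype.linearIndependent_iff.mp hu _ hg1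
    rintro (i | j)
    · exact hinl i
    · exact hinr j

noncomputable def fiberPointEquiv (A : Submodule K V) (y : V ⧸ A) :
    {x : V // A.mkQ x = y} ≃ ↥A where
  toFun x := ⟨x.1 - (A.mkQ_surjective y).choose, by
    rw [← Submodule.Quotient.mk_eq_zero A, ← Submodule.mkQ_apply, map_sub, x.2,
      (A.mkQ_surjective y).choose_spec, sub_self]⟩
  invFun a := ⟨(A.mkQ_surjective y).choose + a.1, by
    rw [map_add, (A.mkQ_surjective y).choose_spec, Submodule.mkQ_apply,
      (Submodule.Quotient.mk_eq_zero A).mpr a.2, add_zero]⟩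
  left_inv x := Subtype.ext (by simp)
  right_inv a := Subtype.ext (by simp)

noncomputable def uPartEquiv (A : Submodule K V) :
    {u : Fin (finrank K ↥A) → V // LinearIndependent K u ∧ span K (range u) = A} ≃
      {u' : Fin (finrank K ↥A) → ↥A // LinearIndependent K u'} where
  toFun u := ⟨fun i => ⟨u.1 i, (le_of_eq u.2.2) (subset_span (mem_range_self i))⟩, by
    refine LinearIndependent.of_comp A.subtype ?_
    have h : A.subtype ∘ (fun i =>
        (⟨u.1 i, (le_of_eq u.2.2) (subset_span (mem_range_self i))⟩ : ↥A)) = u.1 :=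
      funext fun i => rfl
    rw [h]
    exact u.2.1⟩
  invFun u' := ⟨A.subtype ∘ u'.1, u'.2.map' A.subtype (Submodule.ker_subtype A), by
    rw [Set.range_comp, ← Submodule.map_span,
      u'.2.span_eq_top_of_card_eq_finrank' (by rw [Fintype.card_fin]),
      Submodule.map_top, Submodule.range_subtype]⟩
  left_inv u := Subtype.ext (funext fun i => rfl)
  right_inv u' := Subtype.ext (funext fun i => Subtype.ext rfl)

lemma card_w_part (hK : Fintype.card K = q) (A : Submodule K V) (l : ℕ) :
    Nat.card {w : Fin l → V // LinearIndependent K (A.mkQ ∘ w)} =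
      (∏ i ∈ Finset.range l, (q ^ finrank K (V ⧸ A) - q ^ i)) * (q ^ finrank K ↥A) ^ l := by
  have : Finite V := Module.finite_of_finite K
  cases nonempty_fintype V
  have hfiber : ∀ z : Fin l → V ⧸ A,
      Nat.card {w : Fin l → V // A.mkQ ∘ w = z} = (q ^ finrank K ↥A) ^ l := by
    intro z
    have e : {w : Fin l → V // A.mkQ ∘ w = z} ≃ (Fin l → ↥A) :=
      ((Equiv.subtypeEquivRight (fun w => funext_iff)).trans
        (Equiv.subtypePiEquivPi (p := fun j x => A.mkQ x = z j))).trans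
        (Equiv.piCongrRight (fun j => fiberPointEquiv A (z j)))
    rw [Nat.card_congr e]
    cases nonempty_fintype ↥A
    rw [Nat.card_eq_fintype_card, Fintype.card_fun, ← Nat.card_eq_fintype_card,
      card_module_eq hK, Fintype.card_fin]
  -- fiberwise count over the quotient
  rw [Nat.card_eq_fintype_card, Fintype.card_subtype]
  have hmap : ∀ w ∈ Finset.univ.filter (fun w : Fin l → V => LinearIndependent K (A.mkQ ∘ w)),
      A.mkQ ∘ w ∈ Finset.univ.filter (fun z : Fin l → V ⧸ A => LinearIndependent K z) := by
    intro w hw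
    simp only [Finset.mem_filter, Finset.mem_univ, true_and] at hw ⊢
    exact hw
  rw [Finset.card_eq_sum_card_fiberwise hmap]
  have hconst : ∀ z ∈ Finset.univ.filter (fun z : Fin l → V ⧸ A => LinearIndependent K z),
      ((Finset.univ.filter (fun w : Fin l → V => LinearIndependent K (A.mkQ ∘ w))).filter
        (fun w => A.mkQ ∘ w = z)).card = (q ^ finrank K ↥A) ^ l := by
    intro z hz
    simp only [Finset.mem_filter, Finset.mem_univ, true_and] at hz
    rw [Finset.filter_filter]
    have hsame : ∀ w : Fin l → V,
        (LinearIndependent K (A.mkQ ∘ w) ∧ A.mkQ ∘ w = z) ↔ A.mkQ ∘ w = z := by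
      intro w
      constructor
      · exact fun h => h.2
      · intro h; exact ⟨h ▸ hz, h⟩
    rw [Finset.filter_congr (fun w _ => hsame w), ← Fintype.card_subtype,
      ← Nat.card_eq_fintype_card]
    exact hfiber z
  rw [Finset.sum_congr rfl hconst, Finset.sum_const, smul_eq_mul]
  congr 1
  rw [← Fintype.card_subtype, ← Nat.card_eq_fintype_card]
  exact card_li_tuples hK l

lemma card_selector (hK : Fintype.card K = q) {n : ℕ} (hV : finrank K V = n)
    (A : Submodule K V) (hk : finrank K ↥A ≤ n) :
    Nat.card {b : Fin n → V // LinearIndependent K b ∧ sfirst K (finrank K ↥A) b = A} =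
      QS.bcount q (finrank K ↥A) * QS.bcount q (n - finrank K ↥A) *
        q ^ (finrank K ↥A * (n - finrank K ↥A)) := by
  set k := finrank K ↥A with hkdef
  set l := n - k with hldef
  have hkl : k + l = n := by omega
  let ehat : Fin k ⊕ Fin l ≃ Fin n := finSumFinEquiv.trans (finCongr hkl)
  have hval : ∀ i : Fin k, ((ehat (Sum.inl i) : Fin n) : ℕ) = (i : ℕ) := by
    intro i
    show (((finSumFinEquiv.trans (finCongr hkl)) (Sum.inl i) : Fin n) : ℕ) = (i : ℕ)
    simp [finSumFinEquiv_apply_left]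
  let base : (Fin n → V) ≃ (Fin k ⊕ Fin l → V) :=
    Equiv.arrowCongr ehat.symm (Equiv.refl V)
  have hbase : ∀ (b : Fin n → V) (s : Fin k ⊕ Fin l), base b s = b (ehat s) := by
    intro b s
    show (Equiv.arrowCongr ehat.symm (Equiv.refl V)) b s = b (ehat s)
    simp [Equiv.arrowCongr]
  -- step 0
  have hiff0 : ∀ b : Fin n → V, (LinearIndependent K b ∧ sfirst K k b = A) ↔
      (LinearIndependent K (base b) ∧ span K (range ((base b) ∘ Sum.inl)) = A) := by
    intro b
    have h1 : (base b : Fin k ⊕ Fin l → V) = b ∘ ehat := funext fun s => hbase b s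
    have h2 : span K (range ((b ∘ ehat) ∘ Sum.inl)) = sfirst K k b := by
      rw [sfirst_eq_span hk]
      have harg : ((b ∘ ehat) ∘ Sum.inl) =
          (fun i : Fin k => b ⟨i, lt_of_lt_of_le i.2 hk⟩) := by
        funext i
        exact congrArg b (Fin.ext (hval i))
      rw [harg]
    rw [h1, linearIndependent_equiv ehat, h2]
  have e0 : {b : Fin n → V // LinearIndependent K b ∧ sfirst K k b = A} ≃
      {c : Fin k ⊕ Fin l → V // LinearIndependent K c ∧ span K (range (c ∘ Sum.inl)) = A} :=
    Equiv.subtypeEquiv base hiff0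
  -- step 1
  have hiff1 : ∀ c : Fin k ⊕ Fin l → V,
      (LinearIndependent K c ∧ span K (range (c ∘ Sum.inl)) = A) ↔
      ((LinearIndependent K (c ∘ Sum.inl) ∧ span K (range (c ∘ Sum.inl)) = A) ∧
        LinearIndependent K (A.mkQ ∘ (c ∘ Sum.inr))) := by
    intro c
    constructor
    · rintro ⟨hc, hsp⟩
      have hu : LinearIndependent K (c ∘ Sum.inl) := hc.comp Sum.inl Sum.inl_injective
      refine ⟨⟨hu, hsp⟩, ?_⟩
      refine (li_sum_elim_iff hu hsp).mp ?_
      rw [Sum.elim_comp_inl_inr]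
      exact hc
    · rintro ⟨⟨hu, hsp⟩, hw⟩
      refine ⟨?_, hsp⟩
      rw [← Sum.elim_comp_inl_inr c]
      exact (li_sum_elim_iff hu hsp).mpr hw
  have e1 : {c : Fin k ⊕ Fin l → V // LinearIndependent K c ∧ span K (range (c ∘ Sum.inl)) = A} ≃
      {p : (Fin k → V) × (Fin l → V) //
        (LinearIndependent K p.1 ∧ span K (range p.1) = A) ∧ LinearIndependent K (A.mkQ ∘ p.2)} :=
    Equiv.subtypeEquiv (Equiv.sumArrowEquivProdArrow _ _ _) (fun c => hiff1 c)
  have e2 : {p : (Fin k → V) × (Fin l → V) //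
        (LinearIndependent K p.1 ∧ span K (range p.1) = A) ∧ LinearIndependent K (A.mkQ ∘ p.2)} ≃
      {u : Fin k → V // LinearIndependent K u ∧ span K (range u) = A} ×
        {w : Fin l → V // LinearIndependent K (A.mkQ ∘ w)} :=
    Equiv.subtypeProdEquivProd
      (p := fun u : Fin k → V => LinearIndependent K u ∧ span K (range u) = A)
      (q := fun w : Fin l → V => LinearIndependent K (A.mkQ ∘ w))
  rw [Nat.card_congr ((e0.trans e1).trans e2), Nat.card_prod]
  have hU : Nat.card {u : Fin k → V // LinearIndependent K u ∧ span K (range u) = A} =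
      QS.bcount q k := by
    rw [Nat.card_congr (uPartEquiv A), card_li_tuples hK, QS.bcount_eq_prod]
  have hquot : finrank K (V ⧸ A) = l := by
    have := Submodule.finrank_quotient_add_finrank A
    omega
  have hW : Nat.card {w : Fin l → V // LinearIndependent K (A.mkQ ∘ w)} =
      QS.bcount q l * q ^ (k * l) := by
    rw [card_w_part hK, hquot, QS.bcount_eq_prod, ← hkdef, ← pow_mul]
  rw [hU, hW, hldef]
  ring

end Selector

section Layers
set_option linter.unusedSectionVars false
set_option maxHeartbeats 1000000

open Module Set Submodule

attribute [local instance] Classical.propDecidable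

variable {K V : Type*} [Field K] [Fintype K] [AddCommGroup V] [Module K V]
  [FiniteDimensional K V] {q n : ℕ}

lemma finite_submodule : Finite (Submodule K V) := by
  have : Finite V := Module.finite_of_finite K
  exact Finite.of_injective (fun A : Submodule K V => (A : Set V)) SetLike.coe_injective

lemma card_li_full (hK : Fintype.card K = q) (hV : finrank K V = n) :
    Nat.card {b : Fin n → V // LinearIndependent K b} = QS.bcount q n := by
  rw [card_li_tuples hK n, hV, QS.bcount_eq_prod]

lemma layer_mul (hK : Fintype.card K = q) (hV : finrank K V = n) {k : ℕ} (hk : k ≤ n) :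
    QS.bcount q n = Nat.card {A : Submodule K V // finrank K ↥A = k} *
      (QS.bcount q k * QS.bcount q (n - k) * q ^ (k * (n - k))) := by
  haveI : Finite V := Module.finite_of_finite K
  cases nonempty_fintype V
  haveI : Finite (Submodule K V) := finite_submodule
  let f : {b : Fin n → V // LinearIndependent K b} → {A : Submodule K V // finrank K ↥A = k} :=
    fun b => ⟨sfirst K k b.1, finrank_sfirst hk b.2⟩
  rw [← card_li_full hK hV, Nat.card_congr (Equiv.sigmaFiberEquiv f).symm]
  haveI : Fintype {A : Submodule K V // finrank K ↥A = k} := Fintype.ofFinite _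
  haveI : Fintype {b : Fin n → V // LinearIndependent K b} := Fintype.ofFinite _
  rw [Nat.card_eq_fintype_card, Fintype.card_sigma]
  have hfib : ∀ A : {A : Submodule K V // finrank K ↥A = k},
      Fintype.card {b : {b : Fin n → V // LinearIndependent K b} // f b = A} =
        QS.bcount q k * QS.bcount q (n - k) * q ^ (k * (n - k)) := by
    intro A
    have e1 : {b : {b : Fin n → V // LinearIndependent K b} // f b = A} ≃
        {b : {b : Fin n → V // LinearIndependent K b} // sfirst K k b.1 = A.1} :=
      Equiv.subtypeEquivRight (fun b => by
        constructor
        · intro h; exact congrArg Subtype.val h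
        · intro h; exact Subtype.ext h)
    have e2 : {b : {b : Fin n → V // LinearIndependent K b} // sfirst K k b.1 = A.1} ≃
        {b : Fin n → V // LinearIndependent K b ∧ sfirst K k b = A.1} :=
      Equiv.subtypeSubtypeEquivSubtypeInter
        (fun b : Fin n → V => LinearIndependent K b) (fun b => sfirst K k b = A.1)
    rw [← Nat.card_eq_fintype_card, Nat.card_congr (e1.trans e2)]
    have hsel := card_selector hK hV A.1 (by rw [A.2]; exact hk)
    rw [A.2] at hsel
    exact hsel
  rw [Finset.sum_congr rfl (fun A _ => hfib A), Finset.sum_const, smul_eq_mul,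
    Finset.card_univ, Nat.card_eq_fintype_card]

lemma card_layer (hq : 2 ≤ q) (hK : Fintype.card K = q) (hV : finrank K V = n) {k : ℕ}
    (hk : k ≤ n) :
    Nat.card {A : Submodule K V // finrank K ↥A = k} = gbinom q n k := by
  have h1 := layer_mul hK hV hk
  have h2 := QS.key_identity (by omega : 1 ≤ q) n k hk
  have hC : 0 < QS.bcount q k * QS.bcount q (n - k) * q ^ (k * (n - k)) := by
    have := QS.bcount_pos hq k
    have := QS.bcount_pos hq (n - k)
    have : 0 < q ^ (k * (n - k)) := pow_pos (by omega) _
    positivity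
  exact Nat.eq_of_mul_eq_mul_right hC (by rw [← h1, h2])

namespace QS

/-- numeric: middle value of `C` is minimal. -/
lemma C_middle_le {q n k : ℕ} (hq : 2 ≤ q) (hk : k ≤ n) :
    bcount q (n/2) * bcount q (n - n/2) * q ^ (n/2 * (n - n/2)) ≤
      bcount q k * bcount q (n - k) * q ^ (k * (n - k)) := by
  have h1 := key_identity (by omega : 1 ≤ q) n k hk
  have h2 := key_identity (by omega : 1 ≤ q) n (n/2) (by omega)
  have hgb : gbinom q n k ≤ gbinom q n (n/2) := gbinom_le_middle hq hk
  have hpos : 0 < gbinom q n (n/2) := gbinom_pos hq (by omega)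
  by_contra hlt
  push_neg at hlt
  have : gbinom q n k * (bcount q k * bcount q (n-k) * q ^ (k * (n-k))) <
      gbinom q n (n/2) * (bcount q (n/2) * bcount q (n - n/2) * q ^ ((n/2) * (n - n/2))) :=
    lt_of_le_of_lt (Nat.mul_le_mul_right _ hgb) ((Nat.mul_lt_mul_left hpos).mpr hlt)
  omega

lemma gbinom_eq_of_C_eq {q n k : ℕ} (hq : 2 ≤ q) (hk : k ≤ n)
    (h : bcount q k * bcount q (n - k) * q ^ (k * (n - k)) =
      bcount q (n/2) * bcount q (n - n/2) * q ^ (n/2 * (n - n/2))) :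
    gbinom q n k = gbinom q n (n/2) := by
  have h1 := key_identity (by omega : 1 ≤ q) n k hk
  have h2 := key_identity (by omega : 1 ≤ q) n (n/2) (by omega)
  rw [h] at h1
  have hC : 0 < bcount q (n/2) * bcount q (n - n/2) * q ^ (n/2 * (n - n/2)) := by
    have := bcount_pos hq (n/2)
    have := bcount_pos hq (n - n/2)
    have : 0 < q ^ (n/2 * (n - n/2)) := pow_pos (by omega) _
    positivity
  exact Nat.eq_of_mul_eq_mul_right hC (by rw [h1, h2])

end QS

end Layers

section Final
set_option linter.unusedSectionVars false
set_option maxHeartbeats 2000000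

open Module Set Submodule

attribute [local instance] Classical.propDecidable

variable {K V : Type*} [Field K] [Fintype K] [AddCommGroup V] [Module K V]
  [FiniteDimensional K V] {q n : ℕ}

lemma sfirst_finCongr {r N N' : ℕ} (h : N = N') (w : Fin N' → V) :
    sfirst K r (w ∘ finCongr h) = sfirst K r w := by
  unfold sfirst
  congr 1
  ext y
  constructor
  · rintro ⟨x, hx, rfl⟩
    exact ⟨finCongr h x, hx, rfl⟩
  · rintro ⟨x, hx, rfl⟩
    refine ⟨finCongr h.symm x, hx, ?_⟩
    show w (finCongr h (finCongr h.symm x)) = w x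
    congr 1

noncomputable def OmegaF (K : Type*) {V : Type*} [Field K] [AddCommGroup V] [Module K V]
    [Fintype V] (n : ℕ) : Finset (Fin n → V) :=
  Finset.univ.filter (fun b => LinearIndependent K b)

noncomputable def selF (K : Type*) {V : Type*} [Field K] [AddCommGroup V] [Module K V]
    [Fintype V] (n : ℕ) (A : Submodule K V) : Finset (Fin n → V) :=
  (OmegaF K n).filter (fun b => sfirst K (finrank K ↥A) b = A)

lemma mem_OmegaF [Fintype V] {b : Fin n → V} : b ∈ OmegaF K n ↔ LinearIndependent K b := by
  simp [OmegaF]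

lemma mem_selF [Fintype V] {A : Submodule K V} {b : Fin n → V} :
    b ∈ selF K n A ↔ LinearIndependent K b ∧ sfirst K (finrank K ↥A) b = A := by
  simp [selF, OmegaF, Finset.mem_filter, and_assoc]

lemma OmegaF_card [Fintype V] (hK : Fintype.card K = q) (hV : finrank K V = n) :
    (OmegaF (V := V) K n).card = QS.bcount q n := by
  rw [OmegaF, ← Fintype.card_subtype, ← Nat.card_eq_fintype_card]
  exact card_li_full hK hV

lemma selF_card [Fintype V] (hK : Fintype.card K = q) (hV : finrank K V = n)
    (A : Submodule K V) :
    (selF K n A).card = QS.bcount q (finrank K ↥A) * QS.bcount q (n - finrank K ↥A) *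
      q ^ (finrank K ↥A * (n - finrank K ↥A)) := by
  have hsub : selF K n A = Finset.univ.filter
      (fun b : Fin n → V => LinearIndependent K b ∧ sfirst K (finrank K ↥A) b = A) := by
    ext b
    simp [selF, OmegaF, Finset.mem_filter, and_assoc]
  rw [hsub, ← Fintype.card_subtype, ← Nat.card_eq_fintype_card]
  exact card_selector hK hV A (by rw [← hV]; exact A.finrank_le)

end Final

theorem stmt_14 (q n : ℕ) (K : Type*) [Field K] [Fintype K] (hK : Fintype.card K = q)
    (V : Type*) [AddCommGroup V] [Module K V] [FiniteDimensional K V]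
    (hV : finrank K V = n) (hn : 1 < n)
    (F : Set (Submodule K V))
    (hF : ∀ A ∈ F, ∀ B ∈ F, A ≠ B → ¬ A ≤ B) :
    F.ncard ≤ gbinom q n (n / 2)
    ∧ (F.ncard = gbinom q n (n / 2)
        ↔ F = {A : Submodule K V | finrank K A = n / 2}
          ∨ F = {A : Submodule K V | finrank K A = (n + 1) / 2}) := by
  classical
  open Module Set Submodule in
  haveI : Finite V := Module.finite_of_finite K
  haveI : Fintype V := Fintype.ofFinite V
  haveI : Finite (Submodule K V) := finite_submodule
  have hq2 : 2 ≤ q := by rw [← hK]; exact Fintype.one_lt_card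
  have hfr_le : ∀ A : Submodule K V, finrank K ↥A ≤ n := by
    intro A; rw [← hV]; exact A.finrank_le
  have hFfin : F.Finite := Set.toFinite F
  set FF := hFfin.toFinset with hFFdef
  have hFF : ∀ A, A ∈ FF ↔ A ∈ F := fun A => hFfin.mem_toFinset
  set Cf : ℕ → ℕ := fun k => QS.bcount q k * QS.bcount q (n - k) * q ^ (k * (n - k)) with hCf
  have hCpos : ∀ k, 0 < Cf k := by
    intro k
    have h1 := QS.bcount_pos hq2 k
    have h2 := QS.bcount_pos hq2 (n - k)
    have h3 : 0 < q ^ (k * (n - k)) := pow_pos (by omega) _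
    simp only [hCf]
    positivity
  have hselF_card : ∀ A : Submodule K V, (selF K n A).card = Cf (finrank K ↥A) :=
    fun A => selF_card hK hV A
  have hΩcard : (OmegaF (V := V) K n).card = QS.bcount q n := OmegaF_card hK hV
  have hdisj : ∀ A ∈ FF, ∀ B ∈ FF, A ≠ B → Disjoint (selF K n A) (selF K n B) := by
    intro A hA B hB hne
    rw [Finset.disjoint_left]
    intro b hbA hbB
    obtain ⟨hbLI, hbA'⟩ := mem_selF.mp hbA
    obtain ⟨-, hbB'⟩ := mem_selF.mp hbB
    rcases le_total (finrank K ↥A) (finrank K ↥B) with h | h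
    · exact hF A ((hFF A).mp hA) B ((hFF B).mp hB) hne
        (by rw [← hbA', ← hbB']; exact sfirst_mono h b)
    · exact hF B ((hFF B).mp hB) A ((hFF A).mp hA) (Ne.symm hne)
        (by rw [← hbA', ← hbB']; exact sfirst_mono h b)
  have hbiU : (FF.biUnion (selF K n)).card = ∑ A ∈ FF, (selF K n A).card :=
    Finset.card_biUnion hdisj
  have hsub : FF.biUnion (selF K n) ⊆ OmegaF K n :=
    Finset.biUnion_subset.mpr (fun A _ => Finset.filter_subset _ _)
  have hsum_le : ∑ A ∈ FF, (selF K n A).card ≤ (OmegaF (V := V) K n).card := by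
    rw [← hbiU]; exact Finset.card_le_card hsub
  have hlow : ∀ A ∈ FF, Cf (n / 2) ≤ Cf (finrank K ↥A) :=
    fun A _ => QS.C_middle_le hq2 (hfr_le A)
  have hkeym : gbinom q n (n / 2) * Cf (n / 2) = QS.bcount q n :=
    QS.key_identity (by omega : 1 ≤ q) n (n / 2) (by omega)
  have hmain : FF.card * Cf (n / 2) ≤ QS.bcount q n := by
    calc FF.card * Cf (n / 2) = ∑ _A ∈ FF, Cf (n / 2) := by
          rw [Finset.sum_const, smul_eq_mul]
      _ ≤ ∑ A ∈ FF, Cf (finrank K ↥A) := Finset.sum_le_sum hlow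
      _ = ∑ A ∈ FF, (selF K n A).card := by
          exact Finset.sum_congr rfl (fun A _ => (hselF_card A).symm)
      _ ≤ (OmegaF (V := V) K n).card := hsum_le
      _ = QS.bcount q n := hΩcard
  have hbound : FF.card ≤ gbinom q n (n / 2) :=
    Nat.le_of_mul_le_mul_right (le_trans hmain (le_of_eq hkeym.symm)) (hCpos (n / 2))
  have hncard : F.ncard = FF.card := (Set.ncard_eq_toFinset_card F hFfin)
  refine ⟨by rw [hncard]; exact hbound, ?_⟩
  constructor
  · -- equality forward
    intro hEq
    have hFFcard : FF.card = gbinom q n (n / 2) := by rw [← hncard]; exact hEq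
    have hsum_all : ∑ A ∈ FF, (selF K n A).card = (OmegaF (V := V) K n).card := by
      refine le_antisymm hsum_le ?_
      calc (OmegaF (V := V) K n).card = QS.bcount q n := hΩcard
        _ = FF.card * Cf (n / 2) := by rw [hFFcard, hkeym]
        _ = ∑ _A ∈ FF, Cf (n / 2) := by rw [Finset.sum_const, smul_eq_mul]
        _ ≤ ∑ A ∈ FF, Cf (finrank K ↥A) := Finset.sum_le_sum hlow
        _ = ∑ A ∈ FF, (selF K n A).card :=
            Finset.sum_congr rfl (fun A _ => (hselF_card A).symm)
    have hCeq : ∀ A ∈ FF, Cf (finrank K ↥A) = Cf (n / 2) := by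
      intro A₀ hA₀
      by_contra hne
      have hstrict : Cf (n / 2) < Cf (finrank K ↥A₀) :=
        lt_of_le_of_ne (hlow A₀ hA₀) (Ne.symm hne)
      have hlt : ∑ _A ∈ FF, Cf (n / 2) < ∑ A ∈ FF, Cf (finrank K ↥A) :=
        Finset.sum_lt_sum hlow ⟨A₀, hA₀, hstrict⟩
      have h1 : ∑ A ∈ FF, Cf (finrank K ↥A) = ∑ A ∈ FF, (selF K n A).card :=
        Finset.sum_congr rfl (fun A _ => (hselF_card A).symm)
      have h2 : ∑ _A ∈ FF, Cf (n / 2) = FF.card * Cf (n / 2) := by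
        rw [Finset.sum_const, smul_eq_mul]
      rw [h1, hsum_all, hΩcard, h2, hFFcard, hkeym] at hlt
      omega
    have hfrA : ∀ A ∈ FF, finrank K ↥A = n / 2 ∨ finrank K ↥A = (n + 1) / 2 := by
      intro A hA
      exact (QS.gbinom_eq_middle_iff hq2 (hfr_le A)).mp
        (QS.gbinom_eq_of_C_eq hq2 (hfr_le A) (hCeq A hA))
    have hcover : ∀ b : Fin n → V, LinearIndependent K b →
        ∃ A ∈ F, sfirst K (finrank K ↥A) b = A := by
      have hunion : FF.biUnion (selF K n) = OmegaF K n :=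
        Finset.eq_of_subset_of_card_le hsub (by rw [hbiU, hsum_all])
      intro b hb
      have hbΩ : b ∈ OmegaF (V := V) K n := mem_OmegaF.mpr hb
      rw [← hunion] at hbΩ
      obtain ⟨A, hA, hbA⟩ := Finset.mem_biUnion.mp hbΩ
      exact ⟨A, (hFF A).mp hA, (mem_selF.mp hbA).2⟩
    have pair_tuple : ∀ {Cs Ds : Submodule K V}, Cs ≤ Ds → ∃ b : Fin n → V,
        LinearIndependent K b ∧ sfirst K (finrank K ↥Cs) b = Cs ∧
          sfirst K (finrank K ↥Ds) b = Ds := by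
      intro Cs Ds h
      obtain ⟨b, h1, h2, h3⟩ := exists_tuple_pair h
      refine ⟨b ∘ finCongr hV.symm, h1.comp _ (finCongr hV.symm).injective, ?_, ?_⟩
      · rw [sfirst_finCongr]; exact h2
      · rw [sfirst_finCongr]; exact h3
    rcases Nat.even_or_odd n with hev | hod
    · -- n even
      left
      obtain ⟨r, hr⟩ := hev
      have hm2 : (n + 1) / 2 = n / 2 := by omega
      ext A
      simp only [Set.mem_setOf_eq]
      constructor
      · intro hA
        rcases hfrA A ((hFF A).mpr hA) with h | h
        · exact h
        · rw [hm2] at h; exact h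
      · intro hA
        obtain ⟨b, hb, hbC, -⟩ := pair_tuple (le_top : A ≤ ⊤)
        obtain ⟨A', hA', hA'eq⟩ := hcover b hb
        have hfr' : finrank K ↥A' = finrank K ↥A := by
          rcases hfrA A' ((hFF A').mpr hA') with h | h
          · rw [h, hA]
          · rw [h, hm2, hA]
        have : A' = A := by rw [← hA'eq, hfr', hbC]
        rw [← this]
        exact hA'
    · -- n odd
      obtain ⟨t, ht⟩ := hod
      have hmt : n / 2 = t := by omega
      have hmt' : (n + 1) / 2 = t + 1 := by omega
      have hEO : ∀ Cs Ds : Submodule K V, finrank K ↥Cs = t → finrank K ↥Ds = t + 1 →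
          Cs ≤ Ds → (Ds ∉ F ↔ Cs ∈ F) := by
        intro Cs Ds hC hD hCD
        constructor
        · intro hDs
          obtain ⟨b, hb, hbC, hbD⟩ := pair_tuple hCD
          obtain ⟨A, hA, hAeq⟩ := hcover b hb
          rcases hfrA A ((hFF A).mpr hA) with h | h
          · have : A = Cs := by rw [← hAeq, ← hbC, h, hmt, hC]
            rw [← this]; exact hA
          · have : A = Ds := by rw [← hAeq, ← hbD, h, hmt', hD]
            exact absurd (this ▸ hA) hDs
        · intro hCs hDs
          exact hF Cs hCs Ds hDs (by intro h; rw [h, hD] at hC; omega) hCD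
      have hAP : ∀ Cs Cs' : Submodule K V, finrank K ↥Cs = t → finrank K ↥Cs' = t →
          finrank K ↥(Cs ⊓ Cs') = t - 1 → Cs ≠ Cs' → (Cs ∈ F ↔ Cs' ∈ F) := by
        intro Cs Cs' hC hC' hinf hne
        have ht1 : 1 ≤ t := by omega
        have hsup : finrank K ↥(Cs ⊔ Cs') = t + 1 := by
          have := Submodule.finrank_sup_add_finrank_inf_eq Cs Cs'
          rw [hC, hC', hinf] at this
          omega
        rw [← hEO Cs _ hC hsup le_sup_left, ← hEO Cs' _ hC' hsup le_sup_right]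
      have hCN : ∀ j : ℕ, ∀ Cs Cs' : Submodule K V, finrank K ↥Cs = t →
          finrank K ↥Cs' = t → t - finrank K ↥(Cs ⊓ Cs') ≤ j → (Cs ∈ F ↔ Cs' ∈ F) := by
        intro j
        induction j with
        | zero =>
          intro Cs Cs' hC hC' hj
          have hle : finrank K ↥(Cs ⊓ Cs') ≤ t := by
            rw [← hC]; exact Submodule.finrank_mono inf_le_left
          have h1 : Cs ⊓ Cs' = Cs :=
            Submodule.eq_of_le_of_finrank_le inf_le_left (by omega)
          have h2 : Cs ≤ Cs' := by rw [← h1]; exact inf_le_right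
          have h3 : Cs = Cs' := Submodule.eq_of_le_of_finrank_le h2 (by omega)
          rw [h3]
        | succ j ih =>
          intro Cs Cs' hC hC' hj
          rcases le_or_gt (t - finrank K ↥(Cs ⊓ Cs')) j with h | h
          · exact ih Cs Cs' hC hC' h
          have hinfle : finrank K ↥(Cs ⊓ Cs') ≤ t := by
            rw [← hC]; exact Submodule.finrank_mono inf_le_left
          have hfr_lt : finrank K ↥(Cs ⊓ Cs') < t := by omega
          have hnle : ¬ Cs' ≤ Cs := by
            intro hle
            have hinf2 : Cs ⊓ Cs' = Cs' := inf_eq_right.mpr hle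
            rw [hinf2, hC'] at hfr_lt
            omega
          obtain ⟨x, hxC', hxC⟩ := SetLike.not_le_iff_exists.mp hnle
          obtain ⟨E, hE1, hE2, hE3⟩ := exists_subspace_between
            (inf_le_left : Cs ⊓ Cs' ≤ Cs) (U := Cs ⊓ Cs') (r := t - 1)
            (by omega) (by rw [hC]; omega)
          have hxE : x ∉ E := fun hx => hxC (hE2 hx)
          have hC'' : finrank K ↥(E ⊔ (K ∙ x)) = t := by
            rw [_root_.finrank_sup_span_singleton hxE, hE3]
            omega
          have hxmem : x ∈ E ⊔ (K ∙ x) :=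
            (le_sup_right : (K ∙ x) ≤ E ⊔ (K ∙ x)) (Submodule.mem_span_singleton_self x)
          have hCsne : Cs ≠ E ⊔ (K ∙ x) := by
            intro hh
            exact hxC (hh ▸ hxmem)
          have hinf1 : finrank K ↥(Cs ⊓ (E ⊔ (K ∙ x))) = t - 1 := by
            have hle1 : E ≤ Cs ⊓ (E ⊔ (K ∙ x)) := le_inf hE2 le_sup_left
            have h1 : t - 1 ≤ finrank K ↥(Cs ⊓ (E ⊔ (K ∙ x))) := by
              rw [← hE3]; exact Submodule.finrank_mono hle1
            have h2 : finrank K ↥(Cs ⊓ (E ⊔ (K ∙ x))) ≤ t := by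
              rw [← hC]; exact Submodule.finrank_mono inf_le_left
            rcases Nat.lt_or_ge (finrank K ↥(Cs ⊓ (E ⊔ (K ∙ x)))) t with hlt | hge
            · omega
            · exfalso
              have heq : finrank K ↥(Cs ⊓ (E ⊔ (K ∙ x))) = t := by omega
              have : Cs ⊓ (E ⊔ (K ∙ x)) = E ⊔ (K ∙ x) :=
                Submodule.eq_of_le_of_finrank_le inf_le_right (by rw [hC'', heq])
              have hle2 : E ⊔ (K ∙ x) ≤ Cs := by rw [← this]; exact inf_le_left
              exact hxC (hle2 hxmem)
          have step1 : Cs ∈ F ↔ (E ⊔ (K ∙ x)) ∈ F := hAP Cs _ hC hC'' hinf1 hCsne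
          have hxinf : x ∉ Cs ⊓ Cs' := fun hx => hxC (Submodule.mem_inf.mp hx).1
          have hsub2 : (Cs ⊓ Cs') ⊔ (K ∙ x) ≤ (E ⊔ (K ∙ x)) ⊓ Cs' := by
            refine sup_le (le_inf (le_trans hE1 le_sup_left) inf_le_right)
              (le_inf le_sup_right ?_)
            rw [Submodule.span_singleton_le_iff_mem]
            exact hxC'
          have hfr2 : t - finrank K ↥((E ⊔ (K ∙ x)) ⊓ Cs') ≤ j := by
            have hh1 := _root_.finrank_sup_span_singleton hxinf
            have hh2 := Submodule.finrank_mono hsub2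
            omega
          exact step1.trans (ih _ Cs' hC'' hC' hfr2)
      by_cases hex : ∃ A ∈ F, finrank K ↥A = t
      · left
        obtain ⟨A₀, hA₀F, hA₀⟩ := hex
        have hall : ∀ B : Submodule K V, finrank K ↥B = t → B ∈ F := by
          intro B hB
          exact (hCN t A₀ B hA₀ hB (by omega)).mp hA₀F
        ext A
        simp only [Set.mem_setOf_eq, hmt]
        constructor
        · intro hA
          rcases hfrA A ((hFF A).mpr hA) with h | h
          · rw [hmt] at h; exact h
          · exfalso
            rw [hmt'] at h
            obtain ⟨B, -, hBle, hBfr⟩ := exists_subspace_between (bot_le : ⊥ ≤ A) (r := t)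
              (by rw [finrank_bot]; omega) (by rw [h]; omega)
            have hBF := hall B hBfr
            exact hF B hBF A hA (by intro hBA; rw [hBA, h] at hBfr; omega) hBle
        · intro hA; exact hall A hA
      · right
        push_neg at hex
        ext D
        simp only [Set.mem_setOf_eq, hmt']
        constructor
        · intro hD
          rcases hfrA D ((hFF D).mpr hD) with h | h
          · rw [hmt] at h
            exact absurd h (hex D hD)
          · rw [hmt'] at h; exact h
        · intro hD
          obtain ⟨B, -, hBle, hBfr⟩ := exists_subspace_between (bot_le : ⊥ ≤ D) (r := t)
            (by rw [finrank_bot]; omega) (by rw [hD]; omega)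
          by_contra hDF
          exact (hex B ((hEO B D hBfr hD hBle).mp hDF)) hBfr
  · -- equality backward
    rintro (rfl | rfl)
    · have hlayer := card_layer hq2 hK hV (show n / 2 ≤ n by omega)
      rw [← hlayer, ← Nat.card_coe_set_eq]
      exact Nat.card_congr (Equiv.subtypeEquivRight (fun A => by simp)).symm
    · have hlayer := card_layer hq2 hK hV (show (n + 1) / 2 ≤ n by omega)
      rw [QS.gbinom_mid_eq' hq2, ← hlayer, ← Nat.card_coe_set_eq]
      exact Nat.card_congr (Equiv.subtypeEquivRight (fun A => by simp)).symm
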